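/- Let K ≥ 1 and m ≥ 1, let μ₁, …, μ_K be probability measures on a measurable space S with uniform mixture μ = (1/K)·∑_{r=1}^{K} μ_r, and let ℓ : S → ℝ be measurable with ∫ ℓ² dμ_r < ∞ for each r. Define the SRS variance V_SRS = (1/(Km))·Var_μ(ℓ) (the variance of the mean of Km i.i.d. μ-samples of ℓ) and the RSS variance V_RSS = (1/(K²m))·∑_{r=1}^{K} Var_{μ_r}(ℓ) (the variance of the stratified mean with m independent samples from each μ_r). Then V_RSS = V_SRS + (1/(Km))·[ (∫ ℓ dμ)² − (1/K)·∑_{r=1}^{K} (∫ ℓ dμ_r)² ]. -/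

import Mathlib

open MeasureTheory
open scoped ENNReal

/-- Exact relation between the RSS and SRS variances.
With `μ` the uniform mixture of the strata `μr r`, and `Var_ν(ℓ) = ∫ ℓ² dν − (∫ ℓ dν)²`,
the RSS variance `(1/(K²m)) ∑_r Var_{μr r}(ℓ)` equals the SRS variance
`(1/(Km)) Var_μ(ℓ)` plus `(1/(Km)) [ (∫ ℓ dμ)² − (1/K) ∑_r (∫ ℓ dμr r)² ]`. -/
theorem rss_srs_variance_decomposition
    {S : Type*} [MeasurableSpace S]
    (K m : ℕ) (hK : 1 ≤ K) (hm : 1 ≤ m)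
    (μr : Fin K → Measure S) (hprob : ∀ r, IsProbabilityMeasure (μr r))
    (μ : Measure S) (hμ : μ = (K : ℝ≥0∞)⁻¹ • ∑ r, μr r)
    (ℓ : S → ℝ) (hℓ : Measurable ℓ)
    (hsq : ∀ r, Integrable (fun s => ℓ s ^ 2) (μr r)) :
    (1 / ((K : ℝ) ^ 2 * m)) * ∑ r, ((∫ s, ℓ s ^ 2 ∂(μr r)) - (∫ s, ℓ s ∂(μr r)) ^ 2)
      = (1 / ((K : ℝ) * m)) * ((∫ s, ℓ s ^ 2 ∂μ) - (∫ s, ℓ s ∂μ) ^ 2)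
        + (1 / ((K : ℝ) * m)) *
            ((∫ s, ℓ s ∂μ) ^ 2 - (1 / (K : ℝ)) * ∑ r, (∫ s, ℓ s ∂(μr r)) ^ 2) := by
  have hK0 : (K : ℝ) ≠ 0 := by positivity
  have hm0 : (m : ℝ) ≠ 0 := by positivity
  have hint : ∀ r, Integrable ℓ (μr r) := fun r => by
    have := hprob r
    have h2 : MemLp ℓ 2 (μr r) :=
      (memLp_two_iff_integrable_sq hℓ.aestronglyMeasurable).2 (hsq r)
    exact h2.integrable (by norm_num)
  have key : ∀ f : S → ℝ, (∀ r, Integrable f (μr r)) →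
      ∫ s, f s ∂μ = (K : ℝ)⁻¹ * ∑ r, ∫ s, f s ∂(μr r) := by
    intro f hf
    rw [hμ, integral_smul_measure, integral_finset_sum_measure (fun i _ => hf i)]
    simp [ENNReal.toReal_inv]
  rw [key _ hint, key _ hsq]
  field_simp
  rw [Finset.sum_sub_distrib]
  ring
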